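/- Let m, M > 0 with m ≤ M. For any δ* ∈ (0, m/2) there exists a constant c₅ > 0 such that for all w ∈ [m/2, 2M] and all u, v > 0 satisfying |w - v| > δ*, |w - u| ≤ δ*, and either w ≤ u ≤ v or v ≤ u ≤ w, one has Φ(v/w) - Φ(u/w) ≥ c₅|v - u|. -/

import Mathlib

noncomputable def Phi (z : ℝ) : ℝ := z - 1 - Real.log z

set_option maxHeartbeats 1000000 in
/-- Linear lower bound on `Φ(v/w) - Φ(u/w)` when `v` is outside and `u` inside
a `δ*`-neighborhood of `w`. -/
theorem Phi_difference_linear_lower_bound (m M : ℝ) (hm : 0 < m) (hM : 0 < M)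
    (hmM : m ≤ M) (δs : ℝ) (hδs : δs ∈ Set.Ioo 0 (m / 2)) :
    ∃ c₅ : ℝ, 0 < c₅ ∧
      ∀ w ∈ Set.Icc (m / 2) (2 * M), ∀ u v : ℝ, 0 < u → 0 < v →
        δs < |w - v| → |w - u| ≤ δs →
        ((w ≤ u ∧ u ≤ v) ∨ (v ≤ u ∧ u ≤ w)) →
        c₅ * |v - u| ≤ Phi (v / w) - Phi (u / w) := by
  obtain ⟨hδ0, hδm⟩ := hδs
  refine ⟨δs / (24 * M ^ 2), by positivity, ?_⟩
  rintro w ⟨hw1, hw2⟩ u v hu hv hvfar hunear hcase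
  have hw0 : 0 < w := lt_of_lt_of_le (by linarith) hw1
  have hkey : Phi (v / w) - Phi (u / w)
      = (v - u) / w - (Real.log v - Real.log u) := by
    unfold Phi
    rw [Real.log_div hv.ne' hw0.ne', Real.log_div hu.ne' hw0.ne']
    field_simp
    ring
  rw [hkey]
  set p : ℝ := (u + v) / 2 with hp_def
  have hp0 : 0 < p := by positivity
  rcases hcase with ⟨hwu, huv⟩ | ⟨hvu, huw⟩
  · -- increasing case : w ≤ u ≤ v, v > w + δs
    have h1 : δs < v - w := by
      rwa [abs_sub_comm, abs_of_nonneg (by linarith)] at hvfar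
    have h2 : u - w ≤ δs := by
      rwa [abs_sub_comm, abs_of_nonneg (by linarith)] at hunear
    have hpw : w + δs / 2 ≤ p := by
      simp only [hp_def]; linarith
    have hup : u ≤ p := by simp only [hp_def]; linarith
    -- log p - log u ≤ (p - u)/w
    have hA : Real.log p - Real.log u ≤ (p - u) / w := by
      have h := Real.log_le_sub_one_of_pos (show (0:ℝ) < p / u by positivity)
      rw [Real.log_div hp0.ne' hu.ne'] at h
      have heq : p / u - 1 = (p - u) / u := by field_simp
      rw [heq] at h
      have h2' : (p - u) / u ≤ (p - u) / w :=
        div_le_div_of_nonneg_left (by linarith) hw0 hwu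
      linarith
    -- log v - log p ≤ (v - p)/p
    have hB : Real.log v - Real.log p ≤ (v - p) / p := by
      have h := Real.log_le_sub_one_of_pos (show (0:ℝ) < v / p by positivity)
      rw [Real.log_div hv.ne' hp0.ne'] at h
      have heq : v / p - 1 = (v - p) / p := by field_simp
      rw [heq] at h
      linarith
    have habs : |v - u| = v - u := abs_of_nonneg (by linarith)
    rw [habs]
    have hfrac : δs / (12 * M ^ 2) ≤ 1 / w - 1 / p := by
      have h1p : 1 / p ≤ 1 / (w + δs / 2) :=
        one_div_le_one_div_of_le (by linarith) hpw
      have heq : 1 / w - 1 / (w + δs / 2) = (δs / 2) / (w * (w + δs / 2)) := by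
        field_simp; ring
      have hprod : w * (w + δs / 2) ≤ 6 * M ^ 2 := by nlinarith
      have hle : (δs / 2) / (6 * M ^ 2) ≤ (δs / 2) / (w * (w + δs / 2)) :=
        div_le_div_of_nonneg_left (by linarith) (by positivity) hprod
      have heq2 : δs / (12 * M ^ 2) = (δs / 2) / (6 * M ^ 2) := by ring
      linarith
    have hvp : v - p = (v - u) / 2 := by simp only [hp_def]; ring
    have hmul := mul_le_mul_of_nonneg_right hfrac (show (0:ℝ) ≤ v - p by linarith)
    have hsplit : (v - u) / w - ((p - u) / w + (v - p) / p)
        = (1 / w - 1 / p) * (v - p) := by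
      field_simp
      ring
    have hgoal_eq : δs / (24 * M ^ 2) * (v - u) = δs / (12 * M ^ 2) * (v - p) := by
      rw [hvp]; ring
    linarith
  · -- decreasing case : v ≤ u ≤ w, v < w - δs
    have h1 : δs < w - v := by
      rwa [abs_of_nonneg (by linarith)] at hvfar
    have h2 : w - u ≤ δs := by
      rwa [abs_of_nonneg (by linarith)] at hunear
    have hpw : p ≤ w - δs / 2 := by
      simp only [hp_def]; linarith
    have hpu : p ≤ u := by simp only [hp_def]; linarith
    -- (u - p)/w ≤ log u - log p
    have hA : (u - p) / w ≤ Real.log u - Real.log p := by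
      have h := Real.log_le_sub_one_of_pos (show (0:ℝ) < p / u by positivity)
      rw [Real.log_div hp0.ne' hu.ne'] at h
      have heq : p / u - 1 = -((u - p) / u) := by field_simp; ring
      rw [heq] at h
      have h2' : (u - p) / w ≤ (u - p) / u :=
        div_le_div_of_nonneg_left (by linarith) hu huw
      linarith
    -- (p - v)/p ≤ log p - log v
    have hB : (p - v) / p ≤ Real.log p - Real.log v := by
      have h := Real.log_le_sub_one_of_pos (show (0:ℝ) < v / p by positivity)
      rw [Real.log_div hv.ne' hp0.ne'] at h
      have heq : v / p - 1 = -((p - v) / p) := by field_simp; ring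
      rw [heq] at h
      linarith
    have habs : |v - u| = u - v := by
      rw [abs_sub_comm]; exact abs_of_nonneg (by linarith)
    rw [habs]
    have hfrac : δs / (8 * M ^ 2) ≤ 1 / p - 1 / w := by
      have hprod : p * w ≤ 4 * M ^ 2 := by nlinarith
      calc δs / (8 * M ^ 2) = (δs / 2) / (4 * M ^ 2) := by ring
        _ ≤ (w - p) / (p * w) := by
            apply div_le_div₀ (by linarith) (by linarith) (by positivity) hprod
        _ = 1 / p - 1 / w := by field_simp
    have hpv : p - v = (u - v) / 2 := by simp only [hp_def]; ring
    have hmul := mul_le_mul_of_nonneg_right hfrac (show (0:ℝ) ≤ p - v by linarith)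
    have hsplit : (v - u) / w + ((u - p) / w + (p - v) / p)
        = (1 / p - 1 / w) * (p - v) := by
      field_simp
      ring
    have hgoal_eq : δs / (24 * M ^ 2) * (u - v) = δs / (12 * M ^ 2) * (p - v) := by
      rw [hpv]; ring
    have hM2 : (0:ℝ) < M ^ 2 := by positivity
    have h8 : δs / (12 * M ^ 2) ≤ δs / (8 * M ^ 2) :=
      div_le_div_of_nonneg_left hδ0.le (by linarith) (by linarith)
    have hmul2 : δs / (12 * M ^ 2) * (p - v) ≤ δs / (8 * M ^ 2) * (p - v) :=
      mul_le_mul_of_nonneg_right h8 (by linarith)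
    linarith
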